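/- Let K be a field of characteristic 0 and let t, d ∈ K. The Weierstrass curve C_{25,1}(t,d) has invariants c₄ = 2⁴·3⁴·d²·S₂(t)·S₄(t), c₆ = 2⁶·3⁶·d³·S₂(t)²·S₅(t)·S₆(t), and discriminant Δ = 2¹²·3¹²·d⁶·S₁(t)·S₂(t)³·S₃(t)²⁵; moreover, if Δ ≠ 0 then its j-invariant equals S₄(t)³ / (S₁(t)·S₃(t)²⁵). -/
import Mathlib


noncomputable section

/-- The polynomial `S1`. -/
def S1 {K : Type*} [Field K] (t : K) : K := t ^ 4 + t ^ 3 + 6 * t ^ 2 + 6 * t + 11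

/-- The polynomial `S2`. -/
def S2 {K : Type*} [Field K] (t : K) : K := t ^ 2 + 4

/-- The polynomial `S3`. -/
def S3 {K : Type*} [Field K] (t : K) : K := t - 1

/-- The polynomial `S4`. -/
def S4 {K : Type*} [Field K] (t : K) : K := t ^ 10 + 240 * t ^ 9 + 2170 * t ^ 8 + 8880 * t ^ 7 + 34835 * t ^ 6 + 83748 * t ^ 5 + 206210 * t ^ 4 + 313380 * t ^ 3 + 503545 * t ^ 2 + 424740 * t + 375376

/-- The polynomial `S5`. -/
def S5 {K : Type*} [Field K] (t : K) : K := t ^ 4 + 6 * t ^ 3 + 21 * t ^ 2 + 36 * t + 61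

/-- The polynomial `S6`. -/
def S6 {K : Type*} [Field K] (t : K) : K := t ^ 10 - 510 * t ^ 9 - 13580 * t ^ 8 - 36870 * t ^ 7 - 190915 * t ^ 6 - 393252 * t ^ 5 - 1068040 * t ^ 4 - 1508370 * t ^ 3 - 2581955 * t ^ 2 - 2087010 * t - 1885124

/-- The curve `C_{25,1}(t,d)`. -/
def C251 {K : Type*} [Field K] (t d : K) : WeierstrassCurve K :=
  { a₁ := 0, a₂ := 0, a₃ := 0,
    a₄ := -27 * d ^ 2 * S2 t * S4 t,
    a₆ := -54 * d ^ 3 * S2 t ^ 2 * S5 t * S6 t }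

theorem stmt2 {K : Type*} [Field K] [CharZero K] (t d : K) :
    (C251 t d).c₄ = 2 ^ 4 * 3 ^ 4 * d ^ 2 * S2 t * S4 t ∧
    (C251 t d).c₆ = 2 ^ 6 * 3 ^ 6 * d ^ 3 * S2 t ^ 2 * S5 t * S6 t ∧
    (C251 t d).Δ = 2 ^ 12 * 3 ^ 12 * d ^ 6 * S1 t * S2 t ^ 3 * S3 t ^ 25 ∧
    ((C251 t d).Δ ≠ 0 → (C251 t d).c₄ ^ 3 / (C251 t d).Δ =
      S4 t ^ 3 / (S1 t * S3 t ^ 25)) := by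

  have hc4 : (C251 t d).c₄ = 2 ^ 4 * 3 ^ 4 * d ^ 2 * S2 t * S4 t := by
    simp only [C251, WeierstrassCurve.c₄, WeierstrassCurve.b₂, WeierstrassCurve.b₄,
      S1, S2, S3, S4, S5, S6]
    ring
  have hΔ : (C251 t d).Δ = 2 ^ 12 * 3 ^ 12 * d ^ 6 * S1 t * S2 t ^ 3 * S3 t ^ 25 := by
    simp only [C251, WeierstrassCurve.Δ, WeierstrassCurve.b₂, WeierstrassCurve.b₄,
      WeierstrassCurve.b₆, WeierstrassCurve.b₈, S1, S2, S3, S4, S5, S6]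
    ring
  refine ⟨hc4, ?_, hΔ, ?_⟩
  · simp only [C251, WeierstrassCurve.c₆, WeierstrassCurve.b₂, WeierstrassCurve.b₄,
      WeierstrassCurve.b₆, S1, S2, S3, S4, S5, S6]
    ring
  · intro hne
    rw [hΔ] at hne
    have hd : d ≠ 0 := by intro h; apply hne; rw [h]; ring
    have hS2 : S2 t ≠ 0 := by intro h; apply hne; rw [h]; ring
    have hS13 : S1 t * S3 t ^ 25 ≠ 0 := by
      intro h; apply hne
      rw [show (2:K) ^ 12 * 3 ^ 12 * d ^ 6 * S1 t * S2 t ^ 3 * S3 t ^ 25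
        = 2 ^ 12 * 3 ^ 12 * d ^ 6 * S2 t ^ 3 * (S1 t * S3 t ^ 25) by ring, h, mul_zero]
    rw [hc4, hΔ, div_eq_div_iff hne hS13]
    ring
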